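/- For every finite simple graph G without isolated vertices and every integer k ≥ 1, deg(J(G)^{(k)}) ≥ k · deg(J(G)). -/

import Mathlib

open MvPolynomial

/-- `C` is a vertex cover of `G`: every edge is incident to a vertex of `C`. -/
def IsVertexCover {V : Type*} (G : SimpleGraph V) (C : Set V) : Prop :=
  ∀ ⦃a b : V⦄, G.Adj a b → a ∈ C ∨ b ∈ C

/-- `C` is a minimal vertex cover of `G`. -/
def IsMinVertexCover {V : Type*} (G : SimpleGraph V) (C : Set V) : Prop :=
  IsVertexCover G C ∧ ∀ D : Set V, D ⊂ C → ¬ IsVertexCover G D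

/-- `A` is an independent set of `G`. -/
def IsIndepSet {V : Type*} (G : SimpleGraph V) (A : Set V) : Prop :=
  ∀ ⦃a⦄, a ∈ A → ∀ ⦃b⦄, b ∈ A → ¬ G.Adj a b

/-- `A` is a maximal independent set of `G`. -/
def IsMaxIndepSet {V : Type*} (G : SimpleGraph V) (A : Set V) : Prop :=
  IsIndepSet G A ∧ ∀ B : Set V, IsIndepSet G B → A ⊆ B → A = B

/-- A graph is unmixed if all maximal independent sets have the same cardinality. -/
def Unmixed {V : Type*} (G : SimpleGraph V) : Prop :=
  ∀ A B : Set V, IsMaxIndepSet G A → IsMaxIndepSet G B → A.ncard = B.ncard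

/-- `G` has no isolated vertices. -/
def HasNoIsolatedVertex {V : Type*} (G : SimpleGraph V) : Prop :=
  ∀ v : V, ∃ w : V, G.Adj v w

/-- `G` is very well-covered: no isolated vertices, an even number of vertices, and every
maximal independent set has cardinality half the number of vertices. -/
def VeryWellCovered {V : Type*} [Fintype V] (G : SimpleGraph V) : Prop :=
  HasNoIsolatedVertex G ∧ Even (Fintype.card V) ∧
    ∀ A : Set V, IsMaxIndepSet G A → 2 * A.ncard = Fintype.card V

/-- `G` is claw-free: it has no induced subgraph isomorphic to `K_{1,3}`. -/
def ClawFree {V : Type*} (G : SimpleGraph V) : Prop :=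
  ¬ ∃ a b c d : V, G.Adj a b ∧ G.Adj a c ∧ G.Adj a d ∧
      ¬ G.Adj b c ∧ ¬ G.Adj b d ∧ ¬ G.Adj c d ∧ b ≠ c ∧ b ≠ d ∧ c ≠ d

/-- The graph obtained from `G` by deleting the vertices in `A`: it has the same vertex set,
and its edges are the edges of `G` avoiding `A` (so the vertices of `A` become isolated). -/
def deleteVerts {V : Type*} (G : SimpleGraph V) (A : Set V) : SimpleGraph V where
  Adj a b := G.Adj a b ∧ a ∉ A ∧ b ∉ A
  symm := ⟨fun a b ⟨h1, h2, h3⟩ => ⟨h1.symm, h3, h2⟩⟩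
  loopless := ⟨fun a h => G.loopless.irrefl a h.1⟩

/-- The closed neighborhood `N_G[F]` of a set of vertices `F`. -/
def closedNbhdSet {V : Type*} (G : SimpleGraph V) (F : Set V) : Set V :=
  ⋃ a ∈ F, insert a (G.neighborSet a)

/-- The cover ideal `J(G)` of the graph `G`:
the intersection of the ideals `(x_i, x_j)` over the edges `{x_i, x_j}` of `G`. -/
noncomputable def coverIdeal (K : Type*) [Field K] {V : Type*} (G : SimpleGraph V) :
    Ideal (MvPolynomial V K) :=
  ⨅ (p : V × V) (_ : G.Adj p.1 p.2), Ideal.span {X p.1, X p.2}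

/-- The `k`-th symbolic power `J(G)^{(k)}` of the cover ideal of `G`:
the intersection of the ideals `(x_i, x_j)^k` over the edges `{x_i, x_j}` of `G`
(the empty intersection being the unit ideal). -/
noncomputable def symbPow (K : Type*) [Field K] {V : Type*} (G : SimpleGraph V) (k : ℕ) :
    Ideal (MvPolynomial V K) :=
  ⨅ (p : V × V) (_ : G.Adj p.1 p.2), Ideal.span {X p.1, X p.2} ^ k

/-- The degree of a monomial with exponent vector `m`. -/
def mdeg {V : Type*} (m : V →₀ ℕ) : ℕ := m.sum fun _ e => e

/-- The monomial with exponent vector `m` is a minimal monomial generator of `I`. -/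
def IsMinGen {K : Type*} [Field K] {V : Type*} (I : Ideal (MvPolynomial V K)) (m : V →₀ ℕ) :
    Prop :=
  (monomial m (1 : K)) ∈ I ∧
    ∀ i : V, m i ≠ 0 → (monomial (m - Finsupp.single i 1) (1 : K)) ∉ I

/-- `deg I`: the maximum degree of a minimal monomial generator of `I`. -/
noncomputable def genDeg {K : Type*} [Field K] {V : Type*} (I : Ideal (MvPolynomial V K)) : ℕ :=
  sSup {d : ℕ | ∃ m : V →₀ ℕ, IsMinGen I m ∧ mdeg m = d}


lemma prod_aux {K : Type*} [Field K] {V : Type*} [DecidableEq V] {a b : V} (hab : a ≠ b)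
    (m : V →₀ ℕ) :
    (m.prod fun v e => (if v = a ∨ v = b then (Polynomial.X : Polynomial K) else 1) ^ e)
      = Polynomial.X ^ (m a + m b) := by
  classical
  have hm : m = Finsupp.single a (m a) + (Finsupp.single b (m b) + (m.erase a).erase b) := by
    ext v
    by_cases hva : v = a
    · subst hva
      simp [Finsupp.single_apply, hab.symm, Finsupp.erase_apply]
    · by_cases hvb : v = b
      · subst hvb
        simp [Finsupp.single_apply, hab, hva, Finsupp.erase_apply]
      · simp [Finsupp.single_apply, hva, hvb, Finsupp.erase_apply,
          Ne.symm hva, Ne.symm hvb]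
  conv_lhs => rw [hm]
  rw [Finsupp.prod_add_index' (fun _ => pow_zero _) (fun a b1 b2 => pow_add _ _ _),
      Finsupp.prod_add_index' (fun _ => pow_zero _) (fun a b1 b2 => pow_add _ _ _),
      Finsupp.prod_single_index, Finsupp.prod_single_index]
  rotate_left
  · exact pow_zero _
  · exact pow_zero _
  have h3 : (((m.erase a).erase b).prod fun v e =>
      (if v = a ∨ v = b then (Polynomial.X : Polynomial K) else 1) ^ e) = 1 := by
    rw [Finsupp.prod]
    apply Finset.prod_eq_one
    intro v hv
    rw [Finsupp.support_erase, Finset.mem_erase] at hv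
    obtain ⟨hvb, hv⟩ := hv
    rw [Finsupp.support_erase, Finset.mem_erase] at hv
    simp [hv.1, hvb]
  rw [h3, mul_one, if_pos (Or.inl rfl), if_pos (Or.inr rfl), ← pow_add]

lemma monomial_mem_pow_span {K : Type*} [Field K] {V : Type*} {a b : V} (hab : a ≠ b)
    (k : ℕ) (m : V →₀ ℕ) :
    (monomial m (1 : K)) ∈ (Ideal.span {X a, X b} : Ideal (MvPolynomial V K)) ^ k ↔
      k ≤ m a + m b := by
  classical
  constructor
  · intro hmem
    by_contra hlt
    push_neg at hlt
    set φ := (aeval (fun v : V => if v = a ∨ v = b then (Polynomial.X : Polynomial K) else 1) :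
      MvPolynomial V K →ₐ[K] Polynomial K) with hφ
    have himg : φ (monomial m 1) ∈
        Ideal.map φ.toRingHom ((Ideal.span {X a, X b} : Ideal (MvPolynomial V K)) ^ k) :=
      Ideal.mem_map_of_mem _ hmem
    rw [Ideal.map_pow, Ideal.map_span, Set.image_pair] at himg
    have h1 : φ.toRingHom (X a) = Polynomial.X := by simp [hφ]
    have h2 : φ.toRingHom (X b) = Polynomial.X := by simp [hφ]
    rw [h1, h2, Set.pair_eq_singleton, Ideal.span_singleton_pow,
      Ideal.mem_span_singleton] at himg
    have hφm : φ (monomial m 1) = Polynomial.X ^ (m a + m b) := by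
      rw [hφ, aeval_monomial, prod_aux hab m]
      simp
    rw [hφm, Polynomial.X_pow_dvd_iff] at himg
    have := himg (m a + m b) hlt
    simp [Polynomial.coeff_X_pow] at this
  · intro h
    set i := min (m a) k with hi
    set j := k - i with hj
    have hia : i ≤ m a := min_le_left _ _
    have hik : i ≤ k := min_le_right _ _
    have hjb : j ≤ m b := by
      rcases le_or_gt k (m a) with h' | h'
      · have : i = k := min_eq_right h'
        omega
      · have : i = m a := min_eq_left h'.le
        omega
    have hs : Finsupp.single a i + Finsupp.single b j ≤ m := by
      rw [Finsupp.le_def]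
      intro v
      by_cases hva : v = a
      · subst hva; simp [Finsupp.single_apply, hab.symm, hia]
      · by_cases hvb : v = b
        · subst hvb; simp [Finsupp.single_apply, Ne.symm hva, hjb]
        · simp [Finsupp.single_apply, Ne.symm hva, Ne.symm hvb]
    have key : (monomial m (1 : K)) =
        monomial (m - (Finsupp.single a i + Finsupp.single b j)) 1 * (X a ^ i * X b ^ j) := by
      rw [X_pow_eq_monomial, X_pow_eq_monomial, monomial_mul, monomial_mul, one_mul, one_mul]
      congr 1
      exact congrArg monomial (tsub_add_cancel_of_le hs).symm
    rw [key]
    apply Ideal.mul_mem_left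
    have h1 : (X a : MvPolynomial V K) ∈ Ideal.span {X a, X b} :=
      Ideal.subset_span (by simp)
    have h2 : (X b : MvPolynomial V K) ∈ Ideal.span {X a, X b} :=
      Ideal.subset_span (by simp)
    have hmm := Ideal.mul_mem_mul (Ideal.pow_mem_pow h1 i) (Ideal.pow_mem_pow h2 j)
    rwa [← pow_add, Nat.add_sub_cancel' hik] at hmm

lemma mem_symbPow_iff {K : Type*} [Field K] {V : Type*} (G : SimpleGraph V) (k : ℕ)
    (m : V →₀ ℕ) :
    (monomial m (1 : K)) ∈ symbPow K G k ↔ ∀ a b : V, G.Adj a b → k ≤ m a + m b := by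
  unfold symbPow
  simp only [Submodule.mem_iInf]
  constructor
  · intro h a b hab
    exact (monomial_mem_pow_span hab.ne k m).1 (h (a, b) hab)
  · intro h p hp
    exact (monomial_mem_pow_span hp.ne k m).2 (h _ _ hp)

lemma coverIdeal_eq {K : Type*} [Field K] {V : Type*} (G : SimpleGraph V) :
    coverIdeal K G = symbPow K G 1 := by
  simp [coverIdeal, symbPow]

lemma mem_coverIdeal_iff {K : Type*} [Field K] {V : Type*} (G : SimpleGraph V)
    (m : V →₀ ℕ) :
    (monomial m (1 : K)) ∈ coverIdeal K G ↔ ∀ a b : V, G.Adj a b → 1 ≤ m a + m b := by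
  rw [coverIdeal_eq, mem_symbPow_iff]

lemma minGen_bound {K : Type*} [Field K] {V : Type*} [Fintype V] (G : SimpleGraph V)
    (k : ℕ) (m : V →₀ ℕ) (h : IsMinGen (symbPow K G k) m) :
    mdeg m ≤ k * Fintype.card V := by
  classical
  have hv : ∀ v : V, m v ≤ k := by
    intro v
    by_contra hvk
    push_neg at hvk
    have hv0 : m v ≠ 0 := by omega
    have hnm := h.2 v hv0
    rw [mem_symbPow_iff] at hnm
    push_neg at hnm
    obtain ⟨a, b, hab, hlt⟩ := hnm
    have hm := (mem_symbPow_iff G k m).1 h.1 a b hab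
    rw [Finsupp.tsub_apply, Finsupp.tsub_apply, Finsupp.single_apply, Finsupp.single_apply]
      at hlt
    have hnab : a ≠ b := hab.ne
    by_cases hva : v = a
    · have hvb : ¬ v = b := fun h => hnab (hva.symm.trans h)
      rw [if_pos hva, if_neg hvb] at hlt
      rw [hva] at hvk
      omega
    · by_cases hvb : v = b
      · rw [if_neg hva, if_pos hvb] at hlt
        rw [hvb] at hvk
        omega
      · rw [if_neg hva, if_neg hvb] at hlt
        omega
  calc mdeg m = ∑ v ∈ m.support, m v := rfl
    _ ≤ ∑ _v ∈ m.support, k := Finset.sum_le_sum fun v _ => hv v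
    _ = m.support.card * k := by rw [Finset.sum_const, smul_eq_mul]
    _ ≤ Fintype.card V * k := by
        have := Finset.card_le_univ m.support
        exact Nat.mul_le_mul_right _ this
    _ = k * Fintype.card V := Nat.mul_comm _ _

lemma mdeg_smul {V : Type*} (k : ℕ) (m : V →₀ ℕ) : mdeg (k • m) = k * mdeg m := by
  unfold mdeg
  rw [Finsupp.sum_smul_index (fun _ => rfl)]
  simp only [Finsupp.sum, Finset.mul_sum, smul_eq_mul]

/-- Lemma 3.1 of [s7]: for every finite simple graph `G` without isolated
vertices and every `k ≥ 1`, `deg (J(G)^{(k)}) ≥ k * deg (J(G))`. -/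
theorem statement11 {V : Type*} [Fintype V] (K : Type*) [Field K] (G : SimpleGraph V)
    (hiso : HasNoIsolatedVertex G) (k : ℕ) (hk : 1 ≤ k) :
    k * genDeg (coverIdeal K G) ≤ genDeg (symbPow K G k) := by
  classical
  unfold genDeg
  set S := {d : ℕ | ∃ m : V →₀ ℕ, IsMinGen (coverIdeal K G) m ∧ mdeg m = d} with hSdef
  set T := {d : ℕ | ∃ m : V →₀ ℕ, IsMinGen (symbPow K G k) m ∧ mdeg m = d} with hTdef
  have hbT : BddAbove T := by
    refine ⟨k * Fintype.card V, ?_⟩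
    rintro d ⟨m, hm, rfl⟩
    exact minGen_bound G k m hm
  have hbS : BddAbove S := by
    refine ⟨1 * Fintype.card V, ?_⟩
    rintro d ⟨m, hm, rfl⟩
    rw [coverIdeal_eq] at hm
    exact minGen_bound G 1 m hm
  rcases Set.eq_empty_or_nonempty S with hS | hS
  · rw [hS, csSup_empty]
    simp
  · obtain ⟨m, hmin, hdeg⟩ := Nat.sSup_mem hS hbS
    have hmem : ∀ a b : V, G.Adj a b → 1 ≤ m a + m b :=
      (mem_coverIdeal_iff G m).1 hmin.1
    have hT : k * sSup S ∈ T := by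
      refine ⟨k • m, ⟨?_, ?_⟩, by rw [mdeg_smul, hdeg]⟩
      · rw [mem_symbPow_iff]
        intro a b hab
        have := hmem a b hab
        simp only [Finsupp.smul_apply, smul_eq_mul]
        calc k = k * 1 := (mul_one k).symm
          _ ≤ k * (m a + m b) := Nat.mul_le_mul_left k this
          _ = k * m a + k * m b := Nat.mul_add k _ _
      · intro i hi
        have hmi : m i ≠ 0 := by
          simp only [Finsupp.smul_apply, smul_eq_mul] at hi
          intro h0; rw [h0, mul_zero] at hi; exact hi rfl
        have hnm := hmin.2 i hmi
        rw [mem_coverIdeal_iff] at hnm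
        push_neg at hnm
        obtain ⟨a, b, hab, hlt⟩ := hnm
        rw [mem_symbPow_iff]
        push_neg
        refine ⟨a, b, hab, ?_⟩
        have h1 := hmem a b hab
        have hne : a ≠ b := hab.ne
        rw [Finsupp.tsub_apply, Finsupp.tsub_apply, Finsupp.single_apply,
          Finsupp.single_apply] at hlt
        rw [Finsupp.tsub_apply, Finsupp.tsub_apply, Finsupp.single_apply,
          Finsupp.single_apply, Finsupp.smul_apply, Finsupp.smul_apply, smul_eq_mul,
          smul_eq_mul]
        by_cases hia : i = a
        · have hib : ¬ i = b := fun h => hne (hia.symm.trans h)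
          rw [if_pos hia, if_neg hib] at hlt ⊢
          have hma : m a = 1 := by omega
          have hmb : m b = 0 := by omega
          rw [hma, hmb, mul_one, mul_zero]
          omega
        · by_cases hib : i = b
          · rw [if_neg hia, if_pos hib] at hlt ⊢
            have hmb : m b = 1 := by omega
            have hma : m a = 0 := by omega
            rw [hma, hmb, mul_one, mul_zero]
            omega
          · rw [if_neg hia, if_neg hib] at hlt
            omega
    calc k * sSup S ≤ sSup T := le_csSup hbT hT
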